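/- Let Cay(G,S) be a normal Cayley graph and H ≤ G a subgroup such that no irreducible character χ appearing in the permutation representation of G on left cosets of H satisfies (1/χ(1))·Σ_{g∈S} χ(g) = a−b. Then any (a,b)-perfect set W₁ in Cay(G,S) satisfies |xH ∩ W₁|/|H| = b/(k−a+b) for every x ∈ G, where k = |S|; in particular k−a+b divides b·|H|. -/

import Mathlib

open Module

open CategoryTheory Finset

section Defs
variable {k : Type} [Field k] {G : Type} [Group G]

/-- permutation representation on functions -/
noncomputable def permRep (X : Type) [MulAction G X] : Representation k G (X → k) where
  toFun g := LinearMap.funLeft k k (fun c => g⁻¹ • c)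
  map_one' := by ext v c; simp [LinearMap.funLeft]
  map_mul' g h := by ext v c; simp [LinearMap.funLeft, mul_smul]

@[simp] lemma permRep_apply {X : Type} [MulAction G X] (g : G) (v : X → k) (c : X) :
    permRep X g v c = v (g⁻¹ • c) := rfl

/-- restriction of a representation to an invariant subspace -/
noncomputable def subRep {V : Type} [AddCommGroup V] [Module k V] (σ : Representation k G V)
    (U : Submodule k V) (hU : ∀ g : G, ∀ u ∈ U, σ g u ∈ U) : Representation k G U where
  toFun g := (σ g).restrict (hU g)
  map_one' := by ext u; simp [LinearMap.restrict_apply]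
  map_mul' g h := by ext u; simp [LinearMap.restrict_apply]

@[simp] lemma subRep_apply {V : Type} [AddCommGroup V] [Module k V] (σ : Representation k G V)
    (U : Submodule k V) (hU : ∀ g : G, ∀ u ∈ U, σ g u ∈ U) (g : G) (u : U) :
    (subRep σ U hU g u : V) = σ g u := rfl

end Defs

section SimpleCrit
variable {k G : Type} [Field k] [Group G]

lemma simple_of_irreducible {V : Type} [AddCommGroup V] [Module k V] [FiniteDimensional k V]
    (σ : Representation k G V) (hnz : ∃ v : V, v ≠ 0)
    (hirr : ∀ U : Submodule k V, (∀ g : G, ∀ u ∈ U, σ g u ∈ U) → U = ⊥ ∨ U = ⊤) :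
    Simple (FDRep.of σ) := by
  constructor
  intro Y f hmono
  have hcomm : ∀ (g : G) (y : Y), (f.hom.hom.hom : Y →ₗ[k] V) (Y.ρ g y)
      = σ g ((f.hom.hom.hom : Y →ₗ[k] V) y) := by
    intro g y
    have := f.comm g
    have := congrArg (fun (h : Y.V ⟶ (FDRep.of σ).V) => (h.hom.hom : Y →ₗ[k] V) y) this
    exact this
  constructor
  · intro hiso h0
    obtain ⟨v, hv⟩ := hnz
    obtain ⟨finv, hfl, hfr⟩ := hiso.out
    rw [h0, Limits.comp_zero] at hfr
    have := congrArg (fun (h : FDRep.of σ ⟶ FDRep.of σ) => (h.hom.hom.hom : V →ₗ[k] V) v) hfr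
    have h2 : (0 : V →ₗ[k] V) v = LinearMap.id (R := k) (M := V) v := this
    simp at h2
    exact hv h2.symm
  · intro hne
    set φ : Y →ₗ[k] V := (f.hom.hom.hom : Y →ₗ[k] V) with hφ
    -- injectivity
    have hKinv : ∀ g : G, ∀ u ∈ LinearMap.ker φ, Y.ρ g u ∈ LinearMap.ker φ := by
      intro g u hu
      simp only [LinearMap.mem_ker] at hu ⊢
      exact (hcomm g u).trans ((congrArg (σ g) hu).trans (map_zero _))
    let X' : FDRep k G := FDRep.of (subRep Y.ρ (LinearMap.ker φ) hKinv)
    let ι : X' ⟶ Y := ⟨InducedCategory.homMk (ModuleCat.ofHom (LinearMap.ker φ).subtype), fun g => rfl⟩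
    have hι : ι ≫ f = (0 : X' ⟶ Y) ≫ f := by
      rw [Limits.zero_comp]
      ext u
      show φ ((LinearMap.ker φ).subtype u) = (0 : X' ⟶ FDRep.of σ).hom u
      rw [Action.zero_hom]
      have hu := u.2
      simp only [LinearMap.mem_ker] at hu
      exact hu.trans rfl
    have hι0 : ι = 0 := Mono.right_cancellation _ _ hι
    have hker : LinearMap.ker φ = ⊥ := by
      rw [Submodule.eq_bot_iff]
      intro u hu
      have := congrArg (fun (h : X' ⟶ Y) => (h.hom.hom.hom : LinearMap.ker φ →ₗ[k] Y) ⟨u, hu⟩) hι0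
      exact (show u = ι.hom.hom.hom ⟨u, hu⟩ from rfl).trans (by simpa [Action.zero_hom] using this)
    -- surjectivity
    have hRinv : ∀ g : G, ∀ u ∈ LinearMap.range φ, σ g u ∈ LinearMap.range φ := by
      rintro g u ⟨y, rfl⟩
      exact ⟨Y.ρ g y, hcomm g y⟩
    have hφne : φ ≠ 0 := by
      intro h
      apply hne
      ext y
      show φ y = (0 : Y ⟶ FDRep.of σ).hom y
      rw [Action.zero_hom, h]; rfl
    have hrange : LinearMap.range φ = ⊤ := by
      rcases hirr (LinearMap.range φ) hRinv with h | h
      · exact absurd (LinearMap.range_eq_bot.mp h) hφne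
      · exact h
    have hbij : Function.Bijective φ :=
      ⟨LinearMap.ker_eq_bot.mp hker, LinearMap.range_eq_top.mp hrange⟩
    let e : Y ≃ₗ[k] V := LinearEquiv.ofBijective φ hbij
    refine ⟨⟨⟨InducedCategory.homMk (ModuleCat.ofHom (e.symm : V →ₗ[k] Y)), ?_⟩, ?_, ?_⟩⟩
    · intro g
      ext v
      show e.symm (σ g v) = Y.ρ g (e.symm v)
      apply hbij.1
      show φ _ = φ _
      refine Eq.trans ?_ (hcomm g (e.symm v)).symm
      have h1 : φ (e.symm (σ g v)) = σ g v := e.apply_symm_apply _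
      have h2 : φ (e.symm v) = v := e.apply_symm_apply _
      exact h1.trans (congrArg (σ g) h2.symm)
    · ext y
      show e.symm (φ y) = y
      exact e.symm_apply_apply y
    · ext v
      show φ (e.symm v) = v
      exact e.apply_symm_apply v

end SimpleCrit
section Core
variable {G : Type} [Group G] [Fintype G] [DecidableEq G]

lemma perm_char (X : Type) [MulAction G X] [Fintype X] [DecidableEq X] (g : G) :
    LinearMap.trace ℂ (X → ℂ) (permRep (k := ℂ) (G := G) X g)
      = ((Finset.univ.filter (fun c : X => g • c = c)).card : ℂ) := by
  classical
  rw [LinearMap.trace_eq_matrix_trace ℂ (Pi.basisFun ℂ X), Matrix.trace]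
  have hdiag : ∀ c : X, (LinearMap.toMatrix (Pi.basisFun ℂ X) (Pi.basisFun ℂ X)
      (permRep (k := ℂ) (G := G) X g)).diag c = if g • c = c then (1:ℂ) else 0 := by
    intro c
    rw [Matrix.diag, LinearMap.toMatrix_apply]
    simp only [Pi.basisFun_repr, permRep_apply, Pi.basisFun_apply]
    rw [Pi.single_apply]
    congr 1
    simp only [eq_iff_iff]
    rw [inv_smul_eq_iff, eq_comm]
  rw [Finset.sum_congr rfl (fun c _ => hdiag c), Finset.card_filter]
  push_cast
  rfl

set_option maxHeartbeats 1000000 in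
lemma kernel_trivial (S : Finset G) (hconj : ∀ g ∈ S, ∀ x : G, x * g * x⁻¹ ∈ S)
    (H : Subgroup G) [Fintype (G ⧸ H)] [DecidableEq (G ⧸ H)] (θ : ℂ)
    (hH : ∀ V : FDRep ℂ G, CategoryTheory.Simple V →
      (∑ g : G, V.character g *
        ((Finset.univ.filter (fun c : G ⧸ H => g • c = c)).card : ℂ)) ≠ 0 →
      (∑ g ∈ S, V.character g) / V.character 1 ≠ θ)
    (v : (G ⧸ H) → ℂ) (hv : ∑ g ∈ S, permRep (k := ℂ) (G ⧸ H) g v = θ • v) : v = 0 := by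
  classical
  by_contra hv0
  set ρ : Representation ℂ G ((G ⧸ H) → ℂ) := permRep (k := ℂ) (G ⧸ H) with hρ
  -- the "eigenspace"
  set E : Submodule ℂ ((G ⧸ H) → ℂ) := LinearMap.ker
    ((∑ g ∈ S, (ρ g : ((G ⧸ H) → ℂ) →ₗ[ℂ] ((G ⧸ H) → ℂ))) - θ • LinearMap.id) with hE
  have hmemE : ∀ u : (G ⧸ H) → ℂ, u ∈ E ↔ (∑ g ∈ S, ρ g u) = θ • u := by
    intro u
    simp [hE, LinearMap.mem_ker, LinearMap.sub_apply, LinearMap.sum_apply,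
      sub_eq_zero, LinearMap.smul_apply]
  have hEinv : ∀ (x : G), ∀ u ∈ E, ρ x u ∈ E := by
    intro x u hu
    rw [hmemE] at hu ⊢
    have h1 : ∀ g : G, ρ g (ρ x u) = ρ (g * x) u := by
      intro g; rw [map_mul]; rfl
    calc ∑ g ∈ S, ρ g (ρ x u) = ∑ g ∈ S, ρ (g * x) u := by
          exact Finset.sum_congr rfl fun g _ => h1 g
      _ = ∑ g ∈ S, ρ (x * g) u := by
          refine Finset.sum_nbij' (fun g => x⁻¹ * g * x) (fun g => x * g * x⁻¹) ?_ ?_ ?_ ?_ ?_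
          · intro g hg
            have := hconj g hg x⁻¹
            simpa using this
          · intro g hg
            exact hconj g hg x
          · intro g _; group
          · intro g _; group
          · intro g _
            congr 1
            group
      _ = ρ x (∑ g ∈ S, ρ g u) := by
          rw [map_sum]
          exact Finset.sum_congr rfl fun g _ => by rw [map_mul]; rfl
      _ = θ • ρ x u := by rw [hu, map_smul]
  have hEne : E ≠ ⊥ := by
    intro h
    apply hv0
    have : v ∈ E := (hmemE v).mpr hv
    rw [h] at this
    simpa using this
  -- pick an invariant subspace of minimal positive dimension inside E
  set 𝒮 : Set (Submodule ℂ ((G ⧸ H) → ℂ)) :=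
    {U | U ≠ ⊥ ∧ U ≤ E ∧ ∀ (x : G), ∀ u ∈ U, ρ x u ∈ U} with h𝒮
  have hex : ∃ n : ℕ, ∃ U : Submodule ℂ ((G ⧸ H) → ℂ), U ∈ 𝒮 ∧ finrank ℂ U = n :=
    ⟨finrank ℂ E, E, ⟨hEne, le_refl _, hEinv⟩, rfl⟩
  obtain ⟨U, hU𝒮, hUrank⟩ := Nat.find_spec hex
  have hmin : ∀ U' ∈ 𝒮, Nat.find hex ≤ finrank ℂ U' := by
    intro U' hU'
    exact Nat.find_min' hex ⟨U', hU', rfl⟩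
  obtain ⟨hUne, hUE, hUinv⟩ := hU𝒮
  set σ : Representation ℂ G U := subRep ρ U hUinv with hσ
  -- a nonzero element of U
  obtain ⟨u₀, hu₀U, hu₀⟩ := Submodule.ne_bot_iff U |>.mp hUne
  have hnz : ∃ u : U, u ≠ 0 := ⟨⟨u₀, hu₀U⟩, fun h => hu₀ (congrArg Subtype.val h)⟩
  -- simplicity
  have hsimple : CategoryTheory.Simple (FDRep.of σ) := by
    refine simple_of_irreducible σ hnz ?_
    intro W hW
    by_cases hWb : W = ⊥
    · exact Or.inl hWb
    right
    set W' : Submodule ℂ ((G ⧸ H) → ℂ) := W.map U.subtype with hW'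
    have hW'ne : W' ≠ ⊥ := by
      obtain ⟨w, hwW, hw0⟩ := Submodule.ne_bot_iff W |>.mp hWb
      refine Submodule.ne_bot_iff W' |>.mpr ⟨(w : (G ⧸ H) → ℂ), ⟨w, hwW, rfl⟩, ?_⟩
      simpa using hw0
    have hW'U : W' ≤ U := Submodule.map_subtype_le U W
    have hW'𝒮 : W' ∈ 𝒮 := by
      refine ⟨hW'ne, le_trans hW'U hUE, ?_⟩
      rintro x _ ⟨u, huW, rfl⟩
      exact ⟨σ x u, hW x u huW, rfl⟩
    have h1 : Nat.find hex ≤ finrank ℂ W' := hmin W' hW'𝒮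
    have h2 : W' = U := by
      refine Submodule.eq_of_le_of_finrank_le hW'U ?_
      rw [hUrank]; exact h1
    have h3 : W.map U.subtype = (⊤ : Submodule ℂ U).map U.subtype := by
      rw [Submodule.map_top, Submodule.range_subtype]
      exact h2
    exact Submodule.map_injective_of_injective (Submodule.injective_subtype U) h3
  set V : FDRep ℂ G := FDRep.of σ with hV
  -- expression of the characters
  have hchar : ∀ g : G, V.character g = LinearMap.trace ℂ U (σ g) := fun g => rfl
  have hn0 : finrank ℂ U ≠ 0 := by
    intro h
    exact hUne ((Submodule.finrank_eq_zero (R := ℂ) (M := (G ⧸ H) → ℂ)).mp h)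
  -- sum over S
  have hend : (∑ g ∈ S, (σ g : U →ₗ[ℂ] U)) = θ • (LinearMap.id : U →ₗ[ℂ] U) := by
    refine LinearMap.ext fun u => Subtype.ext ?_
    have hmem : (u : (G ⧸ H) → ℂ) ∈ E := hUE u.2
    rw [hmemE] at hmem
    have h5 : ((∑ g ∈ S, (σ g : U →ₗ[ℂ] U)) u : (G ⧸ H) → ℂ)
        = ∑ g ∈ S, ρ g (u : (G ⧸ H) → ℂ) := by
      rw [LinearMap.sum_apply, Submodule.coe_sum]
      rfl
    rw [h5, hmem]
    rfl
  have hchiS : ∑ g ∈ S, V.character g = θ * (finrank ℂ U : ℂ) := by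
    rw [Finset.sum_congr rfl fun g _ => hchar g, ← map_sum, hend]
    rw [map_smul, LinearMap.trace_id]
    simp [smul_eq_mul]
  have hchi1 : V.character 1 = (finrank ℂ U : ℂ) := by
    rw [hchar 1, map_one]
    exact LinearMap.trace_id ℂ U
  -- the fixed-point sum is nonzero
  letI : Invertible ((Fintype.card G : ℂ)) :=
    invertibleOfNonzero (by exact_mod_cast (Nat.cast_ne_zero (R := ℂ)).mpr Fintype.card_ne_zero)
  have hfix : (∑ g : G, V.character g *
      ((Finset.univ.filter (fun c : G ⧸ H => g • c = c)).card : ℂ)) ≠ 0 := by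
    set P : FDRep ℂ G := FDRep.of (permRep (k := ℂ) (G := G) (G ⧸ H)) with hP
    have hPchar : ∀ g : G, P.character g
        = ((Finset.univ.filter (fun c : G ⧸ H => g • c = c)).card : ℂ) := by
      intro g
      exact perm_char (G := G) (G ⧸ H) g
    have hfixinv : ∀ g : G, ((Finset.univ.filter (fun c : G ⧸ H => g⁻¹ • c = c)).card : ℂ)
        = ((Finset.univ.filter (fun c : G ⧸ H => g • c = c)).card : ℂ) := by
      intro g
      congr 2
      apply Finset.filter_congr
      intro c _
      rw [inv_smul_eq_iff, eq_comm]
    have hre : (∑ g : G, V.character g *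
        ((Finset.univ.filter (fun c : G ⧸ H => g • c = c)).card : ℂ))
        = ∑ g : G, (FDRep.of (Representation.linHom σ (permRep (k := ℂ) (G ⧸ H)))).character g := by
      rw [← Equiv.sum_comp (Equiv.inv G) (fun g => V.character g *
        ((Finset.univ.filter (fun c : G ⧸ H => g • c = c)).card : ℂ))]
      refine Finset.sum_congr rfl fun g _ => ?_
      have hlin := FDRep.char_linHom V P g
      have hVρ : V.ρ = σ := rfl
      have hPρ : P.ρ = permRep (k := ℂ) (G ⧸ H) := rfl
      rw [hVρ, hPρ] at hlin
      rw [hlin]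
      simp only [Equiv.inv_apply]
      rw [hPchar g, hfixinv g]
    rw [hre]
    -- use the invariants formula
    set L : FDRep ℂ G := FDRep.of (Representation.linHom σ (permRep (k := ℂ) (G ⧸ H))) with hL
    have havg := FDRep.average_char_eq_finrank_invariants L
    have hLρ : L.ρ = Representation.linHom σ (permRep (k := ℂ) (G ⧸ H)) := rfl
    -- the inclusion is a nonzero invariant element
    have hsub : U.subtype ∈ (Representation.linHom σ (permRep (k := ℂ) (G ⧸ H))).invariants := by
      rw [Representation.mem_invariants]
      intro g
      rw [Representation.linHom_apply]
      refine LinearMap.ext fun u => ?_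
      show (permRep (k := ℂ) (G ⧸ H)) g ((σ g⁻¹ u : (G ⧸ H) → ℂ)) = (u : (G ⧸ H) → ℂ)
      have h6 : (σ g⁻¹ u : (G ⧸ H) → ℂ) = ρ g⁻¹ (u : (G ⧸ H) → ℂ) := rfl
      rw [h6]
      have h7 : ρ g (ρ g⁻¹ (u : (G ⧸ H) → ℂ)) = (u : (G ⧸ H) → ℂ) := by
        rw [← Module.End.mul_apply, ← map_mul, mul_inv_cancel, map_one, Module.End.one_apply]
      exact h7
    have hpos : finrank ℂ (Representation.linHom σ (permRep (k := ℂ) (G ⧸ H))).invariants ≠ 0 := by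
      intro h
      have hbot := (Submodule.finrank_eq_zero
        (R := ℂ) (M := U →ₗ[ℂ] ((G ⧸ H) → ℂ))).mp h
      obtain ⟨u, hu⟩ := hnz
      have h8 : U.subtype = 0 := by
        have := hbot ▸ hsub
        simpa using this
      apply hu
      apply Subtype.ext
      have := congrArg (fun (f : U →ₗ[ℂ] ((G ⧸ H) → ℂ)) => f u) h8
      simpa using this
    intro hzero
    rw [hLρ] at havg
    rw [hzero, mul_zero] at havg
    exact hpos (by exact_mod_cast havg.symm)
  -- contradiction
  have := hH V hsimple hfix
  apply this
  rw [hchiS, hchi1, mul_div_assoc, div_self (by exact_mod_cast hn0), mul_one]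

end Core


set_option maxHeartbeats 1000000 in
theorem stmt_18 {G : Type} [Group G] [Fintype G] [DecidableEq G]
    (S : Finset G) (h1 : (1 : G) ∉ S) (hinv : ∀ g ∈ S, g⁻¹ ∈ S)
    (hconj : ∀ g ∈ S, ∀ x : G, x * g * x⁻¹ ∈ S)
    (hgen : Subgroup.closure (S : Set G) = ⊤)
    (k a b : ℕ) (hk : k = S.card) (ha : a ≤ k - 1) (hb : 1 ≤ b) (hbk : b ≤ k)
    (H : Subgroup G) [DecidablePred (· ∈ H)]
    [Fintype (G ⧸ H)] [DecidableEq (G ⧸ H)]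
    (hH : ∀ V : FDRep ℂ G, CategoryTheory.Simple V →
      (∑ g : G, V.character g *
        ((Finset.univ.filter (fun c : G ⧸ H => g • c = c)).card : ℂ)) ≠ 0 →
      (∑ g ∈ S, V.character g) / V.character 1 ≠ (a : ℂ) - b)
    (W₁ : Finset G) (hne : W₁.Nonempty) (hproper : W₁ ≠ Finset.univ)
    (hA : ∀ y ∈ W₁, (S.filter (fun g => g * y ∈ W₁)).card = a)
    (hB : ∀ y ∉ W₁, (S.filter (fun g => g * y ∈ W₁)).card = b) :
    (∀ x : G, ((W₁.filter (fun w => x⁻¹ * w ∈ H)).card : ℝ) / (Nat.card H)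
        = (b : ℝ) / ((k : ℝ) - a + b)) ∧
    (k - a + b) ∣ b * Nat.card H := by
  classical
  have hk1 : 1 ≤ k := le_trans hb hbk
  have hak : a + 1 ≤ k := by omega
  have hHcard : Nat.card H = Fintype.card H := Nat.card_eq_fintype_card
  have hH0 : Nat.card H ≠ 0 := by rw [hHcard]; exact Fintype.card_ne_zero
  -- the coset-intersection counting function
  set F : (G ⧸ H) → ℂ :=
    fun c => ((W₁.filter (fun w => (QuotientGroup.mk w : G ⧸ H) = c)).card : ℂ) with hF
  have hFmk : ∀ z : G, F (QuotientGroup.mk z)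
      = ((W₁.filter (fun w => z⁻¹ * w ∈ H)).card : ℂ) := by
    intro z
    have hsets : W₁.filter (fun w => (QuotientGroup.mk w : G ⧸ H) = QuotientGroup.mk z)
        = W₁.filter (fun w => z⁻¹ * w ∈ H) :=
      Finset.filter_congr (fun w _ => by rw [eq_comm, QuotientGroup.eq])
    show ((W₁.filter (fun w => (QuotientGroup.mk w : G ⧸ H) = QuotientGroup.mk z)).card : ℂ) = _
    rw [hsets]
  have hdeneq : ((k : ℂ) - a + b) = ((k - a + b : ℕ) : ℂ) := by
    push_cast [Nat.cast_sub (by omega : a ≤ k)]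
    ring
  have hdenne : ((k : ℂ) - a + b) ≠ 0 := by
    rw [hdeneq]
    exact_mod_cast (by omega : k - a + b ≠ 0)
  obtain ⟨c₀, hc₀mul⟩ : ∃ c : ℂ, c * ((k : ℂ) - a + b) = ((b * Nat.card H : ℕ) : ℂ) :=
    ⟨((b * Nat.card H : ℕ) : ℂ) / ((k : ℂ) - a + b), div_mul_cancel₀ _ hdenne⟩
  have hsmul_mk : ∀ (g x : G), g • (QuotientGroup.mk x : G ⧸ H) = QuotientGroup.mk (g * x) :=
    fun g x => rfl
  -- key combinatorial identity
  have hkey : ∀ x : G, ∑ g ∈ S, F (g • (QuotientGroup.mk x : G ⧸ H))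
      = ((a : ℂ) - b) * F (QuotientGroup.mk x) + b * ((Nat.card H : ℕ) : ℂ) := by
    intro x
    set C : Finset G := univ.filter (fun y => x⁻¹ * y ∈ H) with hC
    have hCcard : C.card = Nat.card H := by
      rw [hHcard]
      have h2 : Fintype.card H = (univ.filter (fun y : G => y ∈ H)).card :=
        Fintype.card_subtype _
      rw [h2]
      apply Finset.card_nbij' (i := fun y => x⁻¹ * y) (j := fun h => x * h)
      · intro y hy
        simp only [hC, Finset.mem_coe, Finset.mem_filter, Finset.mem_univ, true_and] at hy ⊢
        exact hy
      · intro y hy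
        simp only [Finset.mem_coe, Finset.mem_filter, Finset.mem_univ, true_and] at hy
        simp only [hC, Finset.mem_coe, Finset.mem_filter, Finset.mem_univ, true_and]
        rwa [← mul_assoc, inv_mul_cancel, one_mul]
      · intro y _; beta_reduce; rw [← mul_assoc, mul_inv_cancel, one_mul]
      · intro y _; beta_reduce; rw [← mul_assoc, inv_mul_cancel, one_mul]
    have hcoset : ∀ g ∈ S, F (g • (QuotientGroup.mk x : G ⧸ H))
        = ((C.filter (fun y => g * y ∈ W₁)).card : ℂ) := by
      intro g _
      rw [hsmul_mk, hFmk]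
      congr 1
      apply Finset.card_nbij' (i := fun w => g⁻¹ * w) (j := fun y => g * y)
      · intro w hw
        simp only [Finset.mem_coe, Finset.mem_filter] at hw
        simp only [hC, Finset.mem_coe, Finset.mem_filter, Finset.mem_univ, true_and]
        constructor
        · have h8 := hw.2
          rwa [mul_inv_rev, mul_assoc] at h8
        · rw [mul_inv_cancel_left]; exact hw.1
      · intro y hy
        simp only [hC, Finset.mem_coe, Finset.mem_filter, Finset.mem_univ, true_and] at hy
        simp only [Finset.mem_coe, Finset.mem_filter]
        refine ⟨hy.2, ?_⟩
        rw [mul_inv_rev, mul_assoc, inv_mul_cancel_left]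
        exact hy.1
      · intro w _; beta_reduce; rw [mul_inv_cancel_left]
      · intro y _; beta_reduce; rw [inv_mul_cancel_left]
    have hdouble : ∑ g ∈ S, ((C.filter (fun y => g * y ∈ W₁)).card)
        = ∑ y ∈ C, ((S.filter (fun g => g * y ∈ W₁)).card) := by
      simp only [Finset.card_filter]
      exact Finset.sum_comm
    have hFx : F (QuotientGroup.mk x) = ((C.filter (fun y => y ∈ W₁)).card : ℂ) := by
      rw [hFmk]
      have hsets2 : W₁.filter (fun w => x⁻¹ * w ∈ H) = C.filter (fun y => y ∈ W₁) := by
        ext w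
        simp only [Finset.mem_filter, hC, Finset.mem_univ, true_and]
        tauto
      rw [hsets2]
    set m : ℕ := (C.filter (fun y => y ∈ W₁)).card with hm
    have hsplit : ∑ y ∈ C, ((S.filter (fun g => g * y ∈ W₁)).card)
        = a * m + b * (C.filter (fun y => ¬ y ∈ W₁)).card := by
      rw [← Finset.sum_filter_add_sum_filter_not C (fun y => y ∈ W₁)]
      congr 1
      · rw [Finset.sum_congr rfl (fun y hy => hA y (Finset.mem_filter.mp hy).2),
          Finset.sum_const, smul_eq_mul, mul_comm]
      · rw [Finset.sum_congr rfl (fun y hy => hB y (Finset.mem_filter.mp hy).2),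
          Finset.sum_const, smul_eq_mul, mul_comm]
    have hmm' : m + (C.filter (fun y => ¬ y ∈ W₁)).card = C.card :=
      Finset.card_filter_add_card_filter_not _
    calc ∑ g ∈ S, F (g • (QuotientGroup.mk x : G ⧸ H))
        = ∑ g ∈ S, ((C.filter (fun y => g * y ∈ W₁)).card : ℂ) := Finset.sum_congr rfl hcoset
      _ = ((∑ g ∈ S, (C.filter (fun y => g * y ∈ W₁)).card : ℕ) : ℂ) :=
          (Nat.cast_sum _ _).symm
      _ = ((a * m + b * (C.filter (fun y => ¬ y ∈ W₁)).card : ℕ) : ℂ) := by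
          rw [hdouble, hsplit]
      _ = _ := by
          rw [hFx]
          have h9 : ((C.filter (fun y => ¬ y ∈ W₁)).card : ℂ) = (C.card : ℂ) - m := by
            have h10 := congrArg (fun n : ℕ => (n : ℂ)) hmm'
            push_cast at h10 ⊢
            linear_combination h10
          push_cast
          rw [h9, hCcard]
          push_cast
          ring
  -- the eigenfunction
  set u : (G ⧸ H) → ℂ := fun c => F c - c₀ with hu
  have heig : ∑ g ∈ S, permRep (k := ℂ) (G ⧸ H) g u = ((a : ℂ) - b) • u := by
    funext c
    obtain ⟨x, rfl⟩ := QuotientGroup.mk_surjective c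
    have h1 : (∑ g ∈ S, permRep (k := ℂ) (G ⧸ H) g u) (QuotientGroup.mk x)
        = ∑ g ∈ S, u (g⁻¹ • (QuotientGroup.mk x : G ⧸ H)) := by
      rw [Finset.sum_apply]
      rfl
    rw [h1]
    have h2 : ∑ g ∈ S, u (g⁻¹ • (QuotientGroup.mk x : G ⧸ H))
        = ∑ g ∈ S, u (g • (QuotientGroup.mk x : G ⧸ H)) := by
      apply Finset.sum_nbij' (i := fun g => g⁻¹) (j := fun g => g⁻¹)
      · intro g hg; exact hinv g hg
      · intro g hg; exact hinv g hg
      · intro g _; simp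
      · intro g _; simp
      · intro g _; simp
    rw [h2]
    have h3 : ∑ g ∈ S, u (g • (QuotientGroup.mk x : G ⧸ H))
        = (∑ g ∈ S, F (g • (QuotientGroup.mk x : G ⧸ H))) - (S.card : ℂ) * c₀ := by
      simp only [hu]
      rw [Finset.sum_sub_distrib, Finset.sum_const, nsmul_eq_mul]
    rw [h3, hkey x, ← hk]
    show _ = ((a : ℂ) - b) * (F (QuotientGroup.mk x) - c₀)
    push_cast at hc₀mul ⊢
    linear_combination (-1 : ℂ) * hc₀mul
  have hu0 : u = 0 := kernel_trivial S hconj H ((a : ℂ) - b) hH u heig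
  have hFc : ∀ z : G, ((W₁.filter (fun w => z⁻¹ * w ∈ H)).card : ℂ) = c₀ := by
    intro z
    have h11 := congrFun hu0 (QuotientGroup.mk z)
    simp only [hu, Pi.zero_apply, sub_eq_zero] at h11
    rw [← hFmk z]
    exact h11
  have hnat : ∀ z : G,
      (W₁.filter (fun w => z⁻¹ * w ∈ H)).card * (k - a + b) = b * Nat.card H := by
    intro z
    have h4 : ((W₁.filter (fun w => z⁻¹ * w ∈ H)).card : ℂ) * ((k : ℂ) - a + b)
        = ((b * Nat.card H : ℕ) : ℂ) := by
      rw [hFc z]; exact hc₀mul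
    rw [hdeneq] at h4
    exact_mod_cast h4
  constructor
  · intro x
    have h5 := hnat x
    have hden' : ((k : ℝ) - a + b) ≠ 0 := by
      have h6 : (a : ℝ) + 1 ≤ k := by exact_mod_cast hak
      have h7 : (1 : ℝ) ≤ b := by exact_mod_cast hb
      intro h0
      linarith
    have hHne : ((Nat.card H : ℝ)) ≠ 0 := by exact_mod_cast hH0
    rw [div_eq_div_iff hHne hden']
    have h12 := congrArg (fun n : ℕ => (n : ℝ)) h5
    push_cast [Nat.cast_sub (by omega : a ≤ k)] at h12
    linarith [h12]
  · exact ⟨(W₁.filter (fun w => (1 : G)⁻¹ * w ∈ H)).card, by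
      rw [← hnat 1]; exact mul_comm _ _⟩
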